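/- arXiv:1604.03439 — 4 statements merged into one kernel-verified Lean document; each statement's English description precedes it below -/
import Mathlib

section
/- For every integer n ≥ 2, the cubic partition function satisfies a(n+2) + a(n−2) > 2·a(n). -/
open Finset

/-- The cubic partition function: `a(n) = ∑_{j=0}^{⌊n/2⌋} p(j)·p(n−2j)`,
the number of partitions of `n` in which even parts come in two colors. -/
noncomputable def cubicPartition (n : ℕ) : ℕ :=
  ∑ j ∈ Finset.range (n / 2 + 1),
    Fintype.card (Nat.Partition j) * Fintype.card (Nat.Partition (n - 2 * j))

/-- Number of partitions of `n`. -/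
private noncomputable abbrev PP (n : ℕ) : ℕ := Fintype.card (Nat.Partition n)

/-- Number of partitions of `n` with no part equal to `2`. -/
private noncomputable abbrev CC (n : ℕ) : ℕ :=
  Fintype.card {π : Nat.Partition n // 2 ∉ π.parts}

/-- Adding a part `1` to a partition of `m` gives a partition of `m+1`. -/
private def addOnePart (m : ℕ) (π : Nat.Partition m) : Nat.Partition (m + 1) :=
  ⟨1 ::ₘ π.parts,
    fun hi => by
      rcases Multiset.mem_cons.1 hi with h | h
      · omega
      · exact π.parts_pos h,
    by rw [Multiset.sum_cons, π.parts_sum]; omega⟩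

private lemma addOnePart_injective (m : ℕ) : Function.Injective (addOnePart m) := by
  intro π σ h
  apply Nat.Partition.ext
  have : (1 ::ₘ π.parts) = (1 ::ₘ σ.parts) := congrArg Nat.Partition.parts h
  exact (Multiset.cons_inj_right _).1 this

private lemma PP_mono_succ (m : ℕ) : PP m ≤ PP (m + 1) :=
  Fintype.card_le_of_injective _ (addOnePart_injective m)

/-- Partitions of `m` correspond to partitions of `m+2` containing a part `2`. -/
private def addTwoEquiv (m : ℕ) :
    Nat.Partition m ≃ {π : Nat.Partition (m + 2) // 2 ∈ π.parts} where
  toFun π := ⟨⟨2 ::ₘ π.parts,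
      fun hi => by
        rcases Multiset.mem_cons.1 hi with h | h
        · omega
        · exact π.parts_pos h,
      by rw [Multiset.sum_cons, π.parts_sum]; omega⟩,
    Multiset.mem_cons_self _ _⟩
  invFun σ := ⟨σ.1.parts.erase 2,
    fun hi => σ.1.parts_pos (Multiset.mem_of_mem_erase hi),
    by
      have h := σ.1.parts_sum
      rw [← Multiset.cons_erase σ.2, Multiset.sum_cons] at h
      omega⟩
  left_inv π := Nat.Partition.ext (Multiset.erase_cons_head _ _)
  right_inv σ := Subtype.ext (Nat.Partition.ext (Multiset.cons_erase σ.2))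

private lemma PP_split (m : ℕ) : PP (m + 2) = PP m + CC (m + 2) := by
  have h1 : CC (m + 2)
      = PP (m + 2) - Fintype.card {π : Nat.Partition (m + 2) // 2 ∈ π.parts} :=
    Fintype.card_subtype_compl _
  have h2 : Fintype.card {π : Nat.Partition (m + 2) // 2 ∈ π.parts} = PP m :=
    (Fintype.card_congr (addTwoEquiv m)).symm
  have h3 : Fintype.card {π : Nat.Partition (m + 2) // 2 ∈ π.parts} ≤ PP (m + 2) :=
    Fintype.card_le_of_injective Subtype.val Subtype.coe_injective
  omega

/-- Adding two parts `1` to a 2-free partition of `m+2` gives a 2-free partition of `m+4`. -/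
private def addTwoOnes (m : ℕ) (π : {π : Nat.Partition (m + 2) // 2 ∉ π.parts}) :
    {π : Nat.Partition (m + 4) // 2 ∉ π.parts} :=
  ⟨⟨1 ::ₘ 1 ::ₘ π.1.parts,
    fun hi => by
      rcases Multiset.mem_cons.1 hi with h | h
      · omega
      rcases Multiset.mem_cons.1 h with h' | h'
      · omega
      · exact π.1.parts_pos h',
    by rw [Multiset.sum_cons, Multiset.sum_cons, π.1.parts_sum]; omega⟩,
    by
      intro h
      rcases Multiset.mem_cons.1 h with h' | h'
      · omega
      rcases Multiset.mem_cons.1 h' with h'' | h''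
      · omega
      · exact π.2 h''⟩

private lemma CC_strict (m : ℕ) : CC (m + 2) < CC (m + 4) := by
  have hinj : Function.Injective (addTwoOnes m) := by
    intro π σ h
    apply Subtype.ext; apply Nat.Partition.ext
    have : (1 ::ₘ 1 ::ₘ π.1.parts) = (1 ::ₘ 1 ::ₘ σ.1.parts) :=
      congrArg (fun x => (Subtype.val x).parts) h
    exact (Multiset.cons_inj_right _).1 ((Multiset.cons_inj_right _).1 this)
  refine Fintype.card_lt_of_injective_of_notMem (addTwoOnes m) hinj
    (b := ⟨⟨{m + 4}, fun hi => by rw [Multiset.mem_singleton] at hi; omega, by simp⟩,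
      by simp⟩) ?_
  rintro ⟨π, h⟩
  have h1 : (1 : ℕ) ∈ ({m + 4} : Multiset ℕ) := by
    have := Multiset.mem_cons_self (1 : ℕ) (1 ::ₘ π.1.parts)
    rw [show (1 ::ₘ 1 ::ₘ π.1.parts) = (addTwoOnes m π).1.parts from rfl, h] at this
    exact this
  simp at h1

/-- Strict step-2 convexity of the partition function. -/
private lemma PP_convex (k : ℕ) : 2 * PP (k + 2) < PP (k + 4) + PP k := by
  have h1 : PP (k + 4) = PP (k + 2) + CC (k + 4) := PP_split (k + 2)
  have h2 : PP (k + 2) = PP k + CC (k + 2) := PP_split k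
  have h3 := CC_strict k
  omega

theorem cubicPartition_convex (n : ℕ) (hn : 2 ≤ n) :
    cubicPartition (n + 2) + cubicPartition (n - 2) > 2 * cubicPartition n := by
  obtain ⟨k, rfl⟩ : ∃ k, n = k + 2 := ⟨n - 2, by omega⟩
  have hsub : k + 2 - 2 = k := by omega
  rw [hsub]
  show 2 * cubicPartition (k + 2) < cubicPartition (k + 2 + 2) + cubicPartition k
  have e4 : cubicPartition (k + 2 + 2)
      = (∑ j ∈ range (k / 2 + 1), PP j * PP (k + 2 + 2 - 2 * j))
        + PP (k / 2 + 1) * PP (k - 2 * (k / 2) + 2)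
        + PP (k / 2 + 1 + 1) * PP (k - 2 * (k / 2)) := by
    unfold cubicPartition
    rw [show (k + 2 + 2) / 2 + 1 = (k / 2 + 1) + 1 + 1 from by omega,
      sum_range_succ, sum_range_succ,
      show k + 2 + 2 - 2 * (k / 2 + 1) = k - 2 * (k / 2) + 2 from by omega,
      show k + 2 + 2 - 2 * (k / 2 + 1 + 1) = k - 2 * (k / 2) from by omega]
  have e2 : cubicPartition (k + 2)
      = (∑ j ∈ range (k / 2 + 1), PP j * PP (k + 2 - 2 * j))
        + PP (k / 2 + 1) * PP (k - 2 * (k / 2)) := by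
    unfold cubicPartition
    rw [show (k + 2) / 2 + 1 = (k / 2 + 1) + 1 from by omega, sum_range_succ,
      show k + 2 - 2 * (k / 2 + 1) = k - 2 * (k / 2) from by omega]
  have e0 : cubicPartition k = ∑ j ∈ range (k / 2 + 1), PP j * PP (k - 2 * j) := rfl
  have key : ∑ j ∈ range (k / 2 + 1),
        2 * (PP j * PP (k + 2 - 2 * j)) <
      ∑ j ∈ range (k / 2 + 1),
        (PP j * PP (k + 2 + 2 - 2 * j) + PP j * PP (k - 2 * j)) := by
    apply Finset.sum_lt_sum_of_nonempty ⟨0, mem_range.2 (by omega)⟩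
    intro j hj
    have hjk : 2 * j ≤ k := by have := mem_range.1 hj; omega
    rw [show k + 2 + 2 - 2 * j = (k - 2 * j) + 4 from by omega,
      show k + 2 - 2 * j = (k - 2 * j) + 2 from by omega]
    have hc := PP_convex (k - 2 * j)
    have hp : 0 < PP j := Fintype.card_pos
    nlinarith
  rw [← Finset.mul_sum, Finset.sum_add_distrib] at key
  have hb1 : PP (k - 2 * (k / 2)) ≤ PP (k - 2 * (k / 2) + 2) :=
    le_trans (PP_mono_succ _) (PP_mono_succ _)
  have hb2 : PP (k / 2 + 1) ≤ PP (k / 2 + 1 + 1) := PP_mono_succ _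
  have hb : 2 * (PP (k / 2 + 1) * PP (k - 2 * (k / 2)))
      ≤ PP (k / 2 + 1) * PP (k - 2 * (k / 2) + 2)
        + PP (k / 2 + 1 + 1) * PP (k - 2 * (k / 2)) := by nlinarith
  rw [e4, e2, e0]
  linarith [key, hb]
end

section
/- For every positive integer n, the cubic partition function satisfies a(n) < exp(π·√n). -/
open Finset Real



lemma geomBound {y : ℝ} (h0 : 0 ≤ y) (h1 : y < 1) (M : ℕ) :
    ∑ m ∈ Finset.range M, y ^ m ≤ (1 - y)⁻¹ := by
  have hy : 0 < 1 - y := by linarith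
  rw [← one_div, le_div_iff₀ hy]
  have h := geom_sum_mul y M
  have hM : 0 ≤ y ^ M := by positivity
  nlinarith [h]




lemma parts_mem_Icc {k N : ℕ} (p : Nat.Partition k) (hk : k ≤ N) :
    p.parts.toFinset ⊆ Finset.Icc 1 N := by
  intro i hi
  rw [Multiset.mem_toFinset] at hi
  rw [Finset.mem_Icc]
  refine ⟨p.parts_pos hi, ?_⟩
  calc i ≤ p.parts.sum := Multiset.single_le_sum (fun x _ => Nat.zero_le x) i hi
    _ = k := p.parts_sum
    _ ≤ N := hk

lemma partition_count_sum {k N : ℕ} (p : Nat.Partition k) (hk : k ≤ N) :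
    ∑ i ∈ Finset.Icc 1 N, i * p.parts.count i = k := by
  have h1 : p.parts.sum = ∑ i ∈ p.parts.toFinset, p.parts.count i • i := by
    simpa using Finset.sum_multiset_map_count p.parts (id : ℕ → ℕ)
  have h2 : ∑ i ∈ Finset.Icc 1 N, i * p.parts.count i
      = ∑ i ∈ p.parts.toFinset, i * p.parts.count i := by
    refine (Finset.sum_subset (parts_mem_Icc p hk) ?_).symm
    intro x _ hx
    rw [Multiset.mem_toFinset] at hx
    rw [Multiset.count_eq_zero_of_notMem hx, mul_zero]
  rw [h2]
  conv_rhs => rw [← p.parts_sum, h1]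
  exact Finset.sum_congr rfl fun i _ => by rw [smul_eq_mul, mul_comm]

lemma partition_count_le {k N : ℕ} (p : Nat.Partition k) (hk : k ≤ N) (i : ℕ) :
    p.parts.count i ≤ N := by
  calc p.parts.count i ≤ Multiset.card p.parts := Multiset.count_le_card _ _
    _ ≤ p.parts.sum := by
        have := Multiset.sum_map_le_sum_map (fun _ => 1) id
          (fun (x:ℕ) (hx : x ∈ p.parts) => p.parts_pos hx)
        simpa using this
    _ = k := p.parts_sum
    _ ≤ N := hk




lemma sum_partition_le (N : ℕ) {x : ℝ} (h0 : 0 ≤ x) (h1 : x < 1) :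
    ∑ k ∈ range (N+1), (Fintype.card (Nat.Partition k) : ℝ) * x ^ k
      ≤ ∏ i ∈ Icc 1 N, (1 - x ^ i)⁻¹ := by
  classical
  set T := (range (N+1)).sigma (fun k => (univ : Finset (Nat.Partition k))) with hT
  have hmem : ∀ q ∈ T, q.1 ≤ N := by
    rintro ⟨k, p⟩ hq
    simp only [hT, Finset.mem_sigma, Finset.mem_range] at hq
    exact Nat.lt_succ_iff.mp hq.1
  -- Step 1 : rewrite LHS as a sum over T of products
  have step1 : ∑ k ∈ range (N+1), (Fintype.card (Nat.Partition k) : ℝ) * x ^ k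
      = ∑ q ∈ T, ∏ i ∈ Icc 1 N, (x ^ i) ^ (q.2.parts.count i) := by
    rw [hT, Finset.sum_sigma]
    refine Finset.sum_congr rfl fun k hk => ?_
    rw [Finset.mem_range] at hk
    have hkN : k ≤ N := Nat.lt_succ_iff.mp hk
    have : ∀ p : Nat.Partition k,
        ∏ i ∈ Icc 1 N, (x ^ i) ^ (p.parts.count i) = x ^ k := by
      intro p
      calc ∏ i ∈ Icc 1 N, (x ^ i) ^ (p.parts.count i)
          = ∏ i ∈ Icc 1 N, x ^ (i * p.parts.count i) := by
            refine Finset.prod_congr rfl fun i _ => ?_; rw [pow_mul]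
        _ = x ^ (∑ i ∈ Icc 1 N, i * p.parts.count i) := by
            rw [Finset.prod_pow_eq_pow_sum]
        _ = x ^ k := by rw [partition_count_sum p hkN]
    rw [Finset.sum_congr rfl (fun p _ => this p), Finset.sum_const, Finset.card_univ,
      nsmul_eq_mul]
  rw [step1]
  -- the injection into the pi finset
  set S := (Icc 1 N).pi (fun _ => range (N+1)) with hS
  set ι : (Σ k : ℕ, Nat.Partition k) → (∀ i ∈ Icc 1 N, ℕ) :=
    fun q => fun i _ => q.2.parts.count i with hι
  have hinj : ∀ q ∈ T, ∀ q' ∈ T, ι q = ι q' → q = q' := by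
    rintro ⟨k, p⟩ hq ⟨k', p'⟩ hq' h
    have hkN := hmem _ hq
    have hkN' := hmem _ hq'
    have hcount : ∀ i ∈ Icc 1 N, p.parts.count i = p'.parts.count i := by
      intro i hi
      have := congrFun (congrFun h i) hi
      simpa [hι] using this
    have hkk : k = k' := by
      rw [← partition_count_sum p hkN, ← partition_count_sum p' hkN']
      exact Finset.sum_congr rfl fun i hi => by rw [hcount i hi]
    subst hkk
    have : p = p' := by
      ext1
      ext i
      by_cases hi : i ∈ Icc 1 N
      · exact hcount i hi
      · rw [Finset.mem_Icc, not_and_or] at hi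
        have h0' : ∀ (pp : Nat.Partition k), i ∉ pp.parts := by
          intro pp hmem'
          rcases hi with hi | hi
          · exact hi (pp.parts_pos hmem')
          · exact hi ((Finset.mem_Icc.mp
              (parts_mem_Icc pp hkN (Multiset.mem_toFinset.mpr hmem'))).2)
        rw [Multiset.count_eq_zero_of_notMem (h0' p),
          Multiset.count_eq_zero_of_notMem (h0' p')]
    rw [this]
  have hpi : ∀ q ∈ T, ι q ∈ S := by
    intro q hq
    rw [hS, Finset.mem_pi]
    intro i hi
    rw [Finset.mem_range, Nat.lt_succ_iff]
    exact partition_count_le q.2 (hmem q hq) i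
  have step2 : ∑ q ∈ T, ∏ i ∈ Icc 1 N, (x ^ i) ^ (q.2.parts.count i)
      ≤ ∑ f ∈ S, ∏ j ∈ (Icc 1 N).attach, (x ^ (j : ℕ)) ^ (f j j.2) := by
    have himg : ∑ q ∈ T, ∏ j ∈ (Icc 1 N).attach, (x ^ (j:ℕ)) ^ (ι q j j.2)
        = ∑ f ∈ T.image ι, ∏ j ∈ (Icc 1 N).attach, (x ^ (j:ℕ)) ^ (f j j.2) :=
      (Finset.sum_image (f := fun f => ∏ j ∈ (Icc 1 N).attach, (x ^ (j:ℕ)) ^ (f j j.2)) hinj).symm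
    have hq : ∀ q : (Σ k : ℕ, Nat.Partition k),
        ∏ j ∈ (Icc 1 N).attach, (x ^ (j:ℕ)) ^ (ι q j j.2)
        = ∏ i ∈ Icc 1 N, (x ^ i) ^ (q.2.parts.count i) := by
      intro q
      rw [← Finset.prod_attach (Icc 1 N) (fun i => (x ^ i) ^ (q.2.parts.count i))]
    calc ∑ q ∈ T, ∏ i ∈ Icc 1 N, (x ^ i) ^ (q.2.parts.count i)
        = ∑ f ∈ T.image ι, ∏ j ∈ (Icc 1 N).attach, (x ^ (j:ℕ)) ^ (f j j.2) := by
          rw [← himg]; exact Finset.sum_congr rfl fun q _ => (hq q).symm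
      _ ≤ ∑ f ∈ S, ∏ j ∈ (Icc 1 N).attach, (x ^ (j:ℕ)) ^ (f j j.2) := by
          refine Finset.sum_le_sum_of_subset_of_nonneg ?_ ?_
          · intro f hf
            rw [Finset.mem_image] at hf
            obtain ⟨q, hqT, rfl⟩ := hf
            exact hpi q hqT
          · intro f _ _
            exact Finset.prod_nonneg fun j _ => pow_nonneg (pow_nonneg h0 _) _
  refine le_trans step2 ?_
  rw [hS, ← Finset.prod_sum (Icc 1 N) (fun _ => range (N+1)) (fun i m => (x ^ i) ^ m)]
  refine Finset.prod_le_prod (fun i _ => Finset.sum_nonneg fun m _ =>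
    pow_nonneg (pow_nonneg h0 _) _) (fun i hi => ?_)
  have hi1 : 1 ≤ i := (Finset.mem_Icc.mp hi).1
  exact geomBound (pow_nonneg h0 i) (pow_lt_one₀ h0 h1 (by omega)) (N+1)




lemma geomBoundIcc {y : ℝ} (h0 : 0 ≤ y) (h1 : y < 1) (N : ℕ) :
    ∑ i ∈ Finset.Icc 1 N, y ^ i ≤ y * (1 - y)⁻¹ := by
  have h : ∑ i ∈ Finset.Icc 1 N, y ^ i = y * ∑ i ∈ Finset.range N, y ^ i := by
    rw [Finset.mul_sum]
    rw [show Finset.Icc 1 N = (Finset.range N).image (· + 1) from ?_]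
    · rw [Finset.sum_image (by intro a _ b _ h; dsimp only at h; omega)]
      exact Finset.sum_congr rfl fun i _ => by rw [pow_succ, mul_comm]
    · ext i
      simp only [Finset.mem_Icc, Finset.mem_image, Finset.mem_range]
      constructor
      · rintro ⟨h1, h2⟩; exact ⟨i - 1, by omega, by omega⟩
      · rintro ⟨a, ha, rfl⟩; omega
  rw [h]
  exact mul_le_mul_of_nonneg_left (geomBound h0 h1 N) h0

lemma inner_bound {r : ℝ} (h0 : 0 < r) (h1 : r < 1) (N k : ℕ) :
    ∑ i ∈ Finset.Icc 1 N, (r ^ i) ^ (k+1) / (k+1)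
      ≤ r / (1-r) * (1 / ((k:ℝ)+1)^2) := by
  have hk1 : (0:ℝ) < (k:ℝ) + 1 := by positivity
  have hsum : ∑ i ∈ Finset.Icc 1 N, (r ^ i) ^ (k+1) / ((k:ℝ)+1)
      = (∑ i ∈ Finset.Icc 1 N, (r ^ (k+1)) ^ i) / ((k:ℝ)+1) := by
    rw [Finset.sum_div]
    refine Finset.sum_congr rfl fun i _ => ?_
    rw [← pow_mul, ← pow_mul, Nat.mul_comm]
  push_cast at hsum ⊢
  rw [hsum]
  set y := r ^ (k+1) with hy
  have hy0 : 0 ≤ y := by positivity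
  have hy1 : y < 1 := pow_lt_one₀ h0.le h1 (Nat.succ_ne_zero k)
  have h1y : (0:ℝ) < 1 - y := by linarith
  have h1r : (0:ℝ) < 1 - r := by linarith
  have h2 : ∑ i ∈ Finset.Icc 1 N, y ^ i ≤ y / (1-y) := by
    rw [div_eq_mul_inv]; exact geomBoundIcc hy0 hy1 N
  have hrk : (0:ℝ) < r ^ k := by positivity
  have hgeq : (1 - r) * (((k:ℝ)+1) * r ^ k) ≤ 1 - y := by
    have hgs : 1 - y = (1 - r) * ∑ j ∈ Finset.range (k+1), r ^ j := by
      have h3 := geom_sum_mul r (k+1)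
      rw [hy]; nlinarith [h3]
    rw [hgs]
    refine mul_le_mul_of_nonneg_left ?_ h1r.le
    calc ((k:ℝ)+1) * r ^ k = ∑ _j ∈ Finset.range (k+1), r ^ k := by
          rw [Finset.sum_const, Finset.card_range, nsmul_eq_mul]; push_cast; ring
      _ ≤ ∑ j ∈ Finset.range (k+1), r ^ j :=
          Finset.sum_le_sum fun j hj => pow_le_pow_of_le_one h0.le h1.le
            (Nat.lt_succ_iff.mp (Finset.mem_range.mp hj))
  have hden : (0:ℝ) < (1 - r) * ((k:ℝ)+1) := by positivity
  have key : y / (1-y) ≤ r / ((1-r) * ((k:ℝ)+1)) := by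
    rw [div_le_div_iff₀ h1y hden]
    have hyr : y * ((1-r) * ((k:ℝ)+1)) = r * ((1-r) * (((k:ℝ)+1) * r ^ k)) := by
      rw [hy, pow_succ]; ring
    rw [hyr]
    exact mul_le_mul_of_nonneg_left hgeq h0.le
  calc (∑ i ∈ Finset.Icc 1 N, y ^ i) / ((k:ℝ)+1)
      ≤ (y / (1-y)) / ((k:ℝ)+1) := by gcongr
    _ ≤ (r / ((1-r) * ((k:ℝ)+1))) / ((k:ℝ)+1) := by gcongr
    _ = r / (1-r) * (1 / ((k:ℝ)+1)^2) := by
        rw [div_div, mul_one_div, div_div]; ring_nf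




lemma prod_le_exp {r : ℝ} (h0 : 0 < r) (h1 : r < 1) (N : ℕ) :
    ∏ i ∈ Finset.Icc 1 N, (1 - r ^ i)⁻¹ ≤ Real.exp (π^2/6 * (r/(1-r))) := by
  have hri : ∀ i ∈ Finset.Icc 1 N, 0 < 1 - r ^ i := by
    intro i hi
    have : r ^ i < 1 := pow_lt_one₀ h0.le h1 (by have := (Finset.mem_Icc.mp hi).1; omega)
    linarith
  have hpos : 0 < ∏ i ∈ Finset.Icc 1 N, (1 - r ^ i)⁻¹ :=
    Finset.prod_pos fun i hi => inv_pos.mpr (hri i hi)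
  rw [← Real.exp_log hpos, Real.exp_le_exp]
  rw [Real.log_prod (fun i hi => (inv_pos.mpr (hri i hi)).ne')]
  -- each log term as a tsum
  have hlog : ∀ i ∈ Finset.Icc 1 N, Real.log (1 - r ^ i)⁻¹
      = ∑' k : ℕ, (r ^ i) ^ (k+1) / (k+1) := by
    intro i hi
    have habs : |r ^ i| < 1 := by
      rw [abs_of_nonneg (by positivity)]
      exact pow_lt_one₀ h0.le h1 (by have := (Finset.mem_Icc.mp hi).1; omega)
    have := (hasSum_pow_div_log_of_abs_lt_one habs).tsum_eq
    rw [Real.log_inv, ← this]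
  rw [Finset.sum_congr rfl hlog]
  have hsummable : ∀ i ∈ Finset.Icc 1 N, Summable (fun k : ℕ => (r ^ i) ^ (k+1) / ((k:ℝ)+1)) := by
    intro i hi
    have habs : |r ^ i| < 1 := by
      rw [abs_of_nonneg (by positivity)]
      exact pow_lt_one₀ h0.le h1 (by have := (Finset.mem_Icc.mp hi).1; omega)
    have := (hasSum_pow_div_log_of_abs_lt_one habs).summable
    convert this using 2 with k
  rw [← Summable.tsum_finsetSum hsummable]
  -- now bound tsum by tsum
  have hbasel : Summable (fun k : ℕ => r / (1-r) * (1 / ((k:ℝ)+1)^2)) := by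
    apply Summable.mul_left
    have := Real.summable_one_div_nat_pow.mpr (by norm_num : 1 < 2)
    exact_mod_cast (summable_nat_add_iff 1).mpr this
  have hle : ∑' k : ℕ, ∑ i ∈ Finset.Icc 1 N, (r ^ i) ^ (k+1) / ((k:ℝ)+1)
      ≤ ∑' k : ℕ, r / (1-r) * (1 / ((k:ℝ)+1)^2) := by
    refine Summable.tsum_le_tsum (fun k => inner_bound h0 h1 N k) ?_ hbasel
    exact summable_sum (fun i hi => hsummable i hi)
  refine hle.trans ?_
  rw [tsum_mul_left]
  have hzeta : ∑' k : ℕ, (1:ℝ) / ((k:ℝ)+1)^2 = π^2/6 := by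
    have h := hasSum_zeta_two
    have h2 := (hasSum_nat_add_iff' 1).mpr h
    simp only [Finset.range_one, Finset.sum_singleton, Nat.cast_zero] at h2
    norm_num at h2
    have := h2.tsum_eq
    rw [← this]
    exact tsum_congr fun k => by push_cast; ring
  rw [hzeta]
  ring_nf
  exact le_refl _



lemma conv_le (n : ℕ) {x : ℝ} (h0 : 0 ≤ x) :
    ∑ j ∈ range (n/2 + 1),
        (Fintype.card (Nat.Partition j) : ℝ) * (Fintype.card (Nat.Partition (n - 2*j)) : ℝ) * x ^ n
      ≤ (∑ k ∈ range (n+1), (Fintype.card (Nat.Partition k) : ℝ) * (x^2) ^ k) *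
        (∑ m ∈ range (n+1), (Fintype.card (Nat.Partition m) : ℝ) * x ^ m) := by
  classical
  rw [Finset.sum_mul_sum]
  rw [← Finset.sum_product']
  set F : ℕ × ℕ → ℝ := fun p =>
    ((Fintype.card (Nat.Partition p.1) : ℝ) * (x^2) ^ p.1) *
    ((Fintype.card (Nat.Partition p.2) : ℝ) * x ^ p.2) with hF
  have key : ∀ j ∈ range (n/2+1),
      (Fintype.card (Nat.Partition j) : ℝ) * (Fintype.card (Nat.Partition (n - 2*j)) : ℝ) * x ^ n
      = F (j, n - 2*j) := by
    intro j hj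
    rw [Finset.mem_range] at hj
    have h2j : 2*j ≤ n := by
      have : j ≤ n/2 := Nat.lt_succ_iff.mp hj
      omega
    have hxn : (x^2) ^ j * x ^ (n - 2*j) = x ^ n := by
      rw [← pow_mul, ← pow_add]
      congr 1
      omega
    rw [hF]
    simp only
    rw [← hxn]
    ring
  rw [Finset.sum_congr rfl key]
  have hinj : ∀ a ∈ range (n/2+1), ∀ b ∈ range (n/2+1),
      (fun j => (j, n - 2*j)) a = (fun j => (j, n - 2*j)) b → a = b := by
    intro a _ b _ h
    simpa using congrArg Prod.fst h
  rw [← Finset.sum_image (f := F) hinj]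
  refine Finset.sum_le_sum_of_subset_of_nonneg ?_ ?_
  · intro p hp
    rw [Finset.mem_image] at hp
    obtain ⟨j, hj, rfl⟩ := hp
    rw [Finset.mem_range] at hj
    have : j ≤ n/2 := Nat.lt_succ_iff.mp hj
    simp only [Finset.mem_product, Finset.mem_range]
    omega
  · intro p _ _
    rw [hF]
    have : (0:ℝ) ≤ x ^ 2 := by positivity
    positivity


open Real in
theorem cubicPartition_upper_bound (n : ℕ) (hn : 0 < n) :
    (cubicPartition n : ℝ) < Real.exp (π * Real.sqrt n) := by
  have hπ : (0:ℝ) < π := Real.pi_pos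
  have hsn : (0:ℝ) < Real.sqrt n := Real.sqrt_pos.mpr (Nat.cast_pos.mpr hn)
  set t : ℝ := 2 * Real.sqrt n / π with ht_def
  have ht : 0 < t := by positivity
  set r : ℝ := t / (1 + t) with hr_def
  have h1t : (0:ℝ) < 1 + t := by linarith
  have hr0 : 0 < r := div_pos ht h1t
  have hr1 : r < 1 := (div_lt_one h1t).mpr (by linarith)
  have h1r : (0:ℝ) < 1 - r := by linarith
  have hrt : r / (1 - r) = t := by
    rw [hr_def]
    have h : 1 - t/(1+t) = 1/(1+t) := by field_simp; ring
    rw [h]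
    field_simp
  have hinv : 1/r = 1 + 1/t := by
    rw [hr_def, one_div_div, add_div, div_self ht.ne', add_comm]
  clear_value r
  -- step 1 : A * r^n ≤ S2 * S1
  have hcast : (cubicPartition n : ℝ)
      = ∑ j ∈ range (n/2 + 1),
          (Fintype.card (Nat.Partition j) : ℝ) * (Fintype.card (Nat.Partition (n - 2*j)) : ℝ) := by
    rw [cubicPartition]
    push_cast
    rfl
  have step1 : (cubicPartition n : ℝ) * r ^ n
      ≤ (∑ k ∈ range (n+1), (Fintype.card (Nat.Partition k) : ℝ) * (r^2) ^ k) *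
        (∑ m ∈ range (n+1), (Fintype.card (Nat.Partition m) : ℝ) * r ^ m) := by
    rw [hcast, Finset.sum_mul]
    exact conv_le n hr0.le
  -- step 2 : each factor bounded by exp
  have hr2_0 : (0:ℝ) < r^2 := by positivity
  have hr2_1 : r^2 < 1 := by nlinarith
  have hS2 : (∑ k ∈ range (n+1), (Fintype.card (Nat.Partition k) : ℝ) * (r^2) ^ k)
      ≤ Real.exp (π^2/6 * (r^2/(1-r^2))) :=
    (sum_partition_le n hr2_0.le hr2_1).trans (prod_le_exp hr2_0 hr2_1 n)
  have hS1 : (∑ m ∈ range (n+1), (Fintype.card (Nat.Partition m) : ℝ) * r ^ m)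
      ≤ Real.exp (π^2/6 * t) := by
    refine (sum_partition_le n hr0.le hr1).trans ?_
    rw [← hrt]
    exact prod_le_exp hr0 hr1 n
  have hS1nn : (0:ℝ) ≤ ∑ m ∈ range (n+1), (Fintype.card (Nat.Partition m) : ℝ) * r ^ m :=
    Finset.sum_nonneg fun m _ => by positivity
  have step2 : (cubicPartition n : ℝ) * r ^ n
      ≤ Real.exp (π^2/6 * (r^2/(1-r^2))) * Real.exp (π^2/6 * t) :=
    step1.trans (mul_le_mul hS2 hS1 hS1nn (Real.exp_pos _).le)
  rw [← Real.exp_add] at step2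
  -- bound the exponent by π√n/2
  have hhalf : r^2/(1-r^2) ≤ t/2 := by
    rw [← hrt]
    have h1r2 : (0:ℝ) < 1 - r^2 := by nlinarith
    rw [div_le_div_iff₀ h1r2 (by norm_num : (0:ℝ) < 2), div_mul_eq_mul_div,
      le_div_iff₀ h1r]
    nlinarith [mul_nonneg hr0.le (sq_nonneg (1-r))]
  have hexp1 : π^2/6 * (r^2/(1-r^2)) + π^2/6 * t ≤ π * Real.sqrt n / 2 := by
    have h1 : π^2/6 * (r^2/(1-r^2)) + π^2/6 * t ≤ π^2/6 * (3/2 * t) := by nlinarith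
    have h2 : π^2/6 * (3/2 * t) = π * Real.sqrt n / 2 := by
      rw [ht_def]
      field_simp
      ring
    linarith [h1, h2.le]
  have step3 : (cubicPartition n : ℝ) * r ^ n ≤ Real.exp (π * Real.sqrt n / 2) :=
    step2.trans (Real.exp_le_exp.mpr hexp1)
  -- divide by r^n
  have hrn : (0:ℝ) < r ^ n := pow_pos hr0 n
  have step4 : (cubicPartition n : ℝ) ≤ Real.exp (π * Real.sqrt n / 2) * (r ^ n)⁻¹ := by
    rw [← le_div_iff₀ hrn] at step3
    rw [← div_eq_mul_inv]
    exact step3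
  -- (1/r)^n < exp(n/t) = exp(π√n/2)
  have hlog : Real.log (1/r) < 1/t := by
    have h1 : (0:ℝ) < 1/r := by positivity
    have h2 : 1/r ≠ 1 := by
      rw [hinv]
      have : 0 < 1/t := by positivity
      linarith
    have := Real.log_lt_sub_one_of_pos h1 h2
    rw [hinv] at this ⊢
    linarith
  have hnt : (n:ℝ) * (1/t) = π * Real.sqrt n / 2 := by
    have hn' : Real.sqrt n * Real.sqrt n = (n:ℝ) := Real.mul_self_sqrt (by positivity)
    rw [ht_def, one_div_div]
    field_simp
    linear_combination (-1) * hn'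
  have step5 : (r ^ n)⁻¹ < Real.exp (π * Real.sqrt n / 2) := by
    have h1 : (r ^ n)⁻¹ = Real.exp ((n:ℝ) * Real.log (1/r)) := by
      rw [← Real.log_pow, Real.exp_log (by positivity), one_div, inv_pow]
    rw [h1, Real.exp_lt_exp, ← hnt]
    exact mul_lt_mul_of_pos_left hlog (by exact_mod_cast hn)
  calc (cubicPartition n : ℝ)
      ≤ Real.exp (π * Real.sqrt n / 2) * (r ^ n)⁻¹ := step4
    _ < Real.exp (π * Real.sqrt n / 2) * Real.exp (π * Real.sqrt n / 2) :=
        mul_lt_mul_of_pos_left step5 (Real.exp_pos _)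
    _ = Real.exp (π * Real.sqrt n) := by
        rw [← Real.exp_add]
        ring_nf
end

section
/- For every real number x with 0 < x < 1, log F(x) ≤ (π²/4)·x/(1−x), where F(x) = ∏_{i=1}^∞ 1/((1−x^i)(1−x^{2i})). -/
/-- The generating function of the cubic partition function,
`F(x) = ∏_{i=1}^∞ 1/((1−x^i)(1−x^{2i}))`, for real `0 < x < 1`. -/
noncomputable def cubicGenFun (x : ℝ) : ℝ :=
  ∏' i : ℕ, 1 / ((1 - x ^ (i + 1)) * (1 - x ^ (2 * (i + 1))))

open Real

private lemma geom_aux {y : ℝ} (h0 : 0 ≤ y) (h1 : y < 1) (n : ℕ) :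
    ((n : ℝ) + 1) * y ^ n * (1 - y) ≤ 1 - y ^ (n + 1) := by
  have h := geom_sum_mul y (n + 1)
  have hsum : ((n : ℝ) + 1) * y ^ n ≤ ∑ k ∈ Finset.range (n + 1), y ^ k := by
    have := Finset.card_nsmul_le_sum (Finset.range (n + 1)) (fun k => y ^ k) (y ^ n)
      (fun k hk => pow_le_pow_of_le_one h0 h1.le (Nat.lt_succ_iff.mp (Finset.mem_range.mp hk)))
    simpa [nsmul_eq_mul, Finset.card_range, add_comm] using this
  have h1y : (0 : ℝ) ≤ 1 - y := by linarith
  nlinarith [mul_le_mul_of_nonneg_right hsum h1y]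

private lemma key_neg_log (y : ℝ) (h0 : 0 < y) (h1 : y < 1) :
    Summable (fun i : ℕ => -Real.log (1 - y ^ (i + 1))) ∧
      ∑' i : ℕ, -Real.log (1 - y ^ (i + 1)) ≤ π ^ 2 / 6 * (y / (1 - y)) := by
  have hylt : ∀ k : ℕ, y ^ (k + 1) < 1 := fun k => pow_lt_one₀ h0.le h1 (by omega)
  have hypos : ∀ k : ℕ, 0 < y ^ (k + 1) := fun k => pow_pos h0 _
  set g : ℕ × ℕ → ℝ := fun p => y ^ ((p.1 + 1) * (p.2 + 1)) / (p.2 + 1) with hg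
  have hg0 : ∀ p, 0 ≤ g p := fun p => by
    have := (hypos 0).le
    positivity
  have hgs : Summable g := by
    refine Summable.of_nonneg_of_le hg0 (fun p => ?_)
      (Summable.mul_of_nonneg (summable_geometric_of_lt_one h0.le h1)
        (summable_geometric_of_lt_one h0.le h1) (fun i => by positivity)
        (fun i => by positivity))
    calc g p ≤ y ^ ((p.1 + 1) * (p.2 + 1)) := by
          apply div_le_self (by positivity)
          exact_mod_cast Nat.succ_le_succ p.2.zero_le
      _ ≤ y ^ (p.1 + p.2) := pow_le_pow_of_le_one h0.le h1.le (by nlinarith [p.1.zero_le])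
      _ = y ^ p.1 * y ^ p.2 := pow_add y p.1 p.2
  have hrow : ∀ i : ℕ, HasSum (fun n => g (i, n)) (-Real.log (1 - y ^ (i + 1))) := by
    intro i
    have habs : |y ^ (i + 1)| < 1 := by rw [abs_of_pos (hypos i)]; exact hylt i
    have h := hasSum_pow_div_log_of_abs_lt_one habs
    have hfun : (fun n : ℕ => g (i, n)) = fun n : ℕ => (y ^ (i + 1)) ^ (n + 1) / (n + 1) := by
      funext n; simp [hg, ← pow_mul]
    rw [hfun]; exact h
  have hcol : ∀ n : ℕ, HasSum (fun i => g (i, n))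
      (y ^ (n + 1) / (1 - y ^ (n + 1)) / (n + 1)) := by
    intro n
    have h := (hasSum_geometric_of_lt_one (hypos n).le (hylt n)).mul_left
      (y ^ (n + 1) / (n + 1))
    have hfun : (fun i : ℕ => y ^ (n + 1) / (n + 1) * (y ^ (n + 1)) ^ i) =
        fun i : ℕ => g (i, n) := by
      funext i
      simp only [hg]
      rw [div_mul_eq_mul_div, ← pow_succ' (y ^ (n + 1)) i, ← pow_mul,
        Nat.mul_comm (n + 1) (i + 1)]
    rw [hfun] at h
    have e : y ^ (n + 1) / (1 - y ^ (n + 1)) / (n + 1) =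
        y ^ (n + 1) / (n + 1) * (1 - y ^ (n + 1))⁻¹ := by ring
    rw [e]; exact h
  have H1 : HasSum (fun i : ℕ => -Real.log (1 - y ^ (i + 1))) (∑' p, g p) :=
    hgs.hasSum.prod_fiberwise hrow
  have hswap : HasSum (fun p : ℕ × ℕ => g p.swap) (∑' p, g p) :=
    ((Equiv.prodComm ℕ ℕ).hasSum_iff).mpr hgs.hasSum
  have H2 : HasSum (fun n : ℕ => y ^ (n + 1) / (1 - y ^ (n + 1)) / (n + 1)) (∑' p, g p) :=
    hswap.prod_fiberwise hcol
  refine ⟨H1.summable, ?_⟩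
  have hBasel : HasSum (fun n : ℕ => 1 / ((n : ℝ) + 1) ^ 2) (π ^ 2 / 6) := by
    have h := (hasSum_nat_add_iff' (f := fun n : ℕ => (1 : ℝ) / (n : ℝ) ^ 2) 1).mpr hasSum_zeta_two
    simpa using h
  rw [H1.tsum_eq, ← H2.tsum_eq]
  have hterm : ∀ n : ℕ, y ^ (n + 1) / (1 - y ^ (n + 1)) / (n + 1) ≤
      y / (1 - y) * (1 / ((n : ℝ) + 1) ^ 2) := by
    intro n
    have hA := geom_aux h0.le h1 n
    have hApos : (0 : ℝ) < 1 - y ^ (n + 1) := by linarith [hylt n]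
    have hn1 : (0 : ℝ) < (n : ℝ) + 1 := by positivity
    have hyn : (0 : ℝ) < y ^ n := pow_pos h0 n
    have h1y : (0 : ℝ) < 1 - y := by linarith
    have hgoal : y * ((n : ℝ) + 1) * (((n : ℝ) + 1) * y ^ n * (1 - y)) ≤
        y * ((n : ℝ) + 1) * (1 - y ^ (n + 1)) :=
      mul_le_mul_of_nonneg_left hA (by positivity)
    have hys : y ^ (n + 1) = y ^ n * y := pow_succ y n
    rw [div_div, mul_one_div, div_div, div_le_div_iff₀ (by positivity) (by positivity)]
    calc y ^ (n + 1) * ((1 - y) * ((n : ℝ) + 1) ^ 2)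
        = y * ((n : ℝ) + 1) * (((n : ℝ) + 1) * y ^ n * (1 - y)) := by rw [hys]; ring
      _ ≤ y * ((n : ℝ) + 1) * (1 - y ^ (n + 1)) := hgoal
      _ = y * ((1 - y ^ (n + 1)) * ((n : ℝ) + 1)) := by ring
  calc ∑' n : ℕ, y ^ (n + 1) / (1 - y ^ (n + 1)) / (n + 1)
      ≤ ∑' n : ℕ, y / (1 - y) * (1 / ((n : ℝ) + 1) ^ 2) :=
        H2.summable.tsum_le_tsum hterm (hBasel.mul_left _).summable
    _ = y / (1 - y) * (π ^ 2 / 6) := by rw [tsum_mul_left, hBasel.tsum_eq]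
    _ = π ^ 2 / 6 * (y / (1 - y)) := mul_comm _ _

open Real in
theorem log_cubicGenFun_le (x : ℝ) (h0 : 0 < x) (h1 : x < 1) :
    Real.log (cubicGenFun x) ≤ π ^ 2 / 4 * (x / (1 - x)) := by
  have hx1 : ∀ i : ℕ, 0 < 1 - x ^ (i + 1) := fun i => by
    have : x ^ (i + 1) < 1 := pow_lt_one₀ h0.le h1 (by omega); linarith
  have hx2 : (0 : ℝ) < x ^ 2 := by positivity
  have hx21 : x ^ 2 < 1 := by nlinarith
  have hx2i : ∀ i : ℕ, 0 < 1 - (x ^ 2) ^ (i + 1) := fun i => by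
    have : (x ^ 2) ^ (i + 1) < 1 := pow_lt_one₀ hx2.le hx21 (by omega); linarith
  have k1 := key_neg_log x h0 h1
  have k2 := key_neg_log (x ^ 2) hx2 hx21
  set f : ℕ → ℝ := fun i => 1 / ((1 - x ^ (i + 1)) * (1 - x ^ (2 * (i + 1)))) with hf
  have hrw : ∀ i : ℕ, x ^ (2 * (i + 1)) = (x ^ 2) ^ (i + 1) := fun i => pow_mul x 2 (i + 1)
  have hfpos : ∀ i, 0 < f i := fun i => by
    have h1i := hx1 i
    have h2i := hx2i i
    rw [hf]
    dsimp only
    rw [hrw i]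
    positivity
  have hlogf : ∀ i, Real.log (f i) =
      -Real.log (1 - x ^ (i + 1)) + -Real.log (1 - (x ^ 2) ^ (i + 1)) := by
    intro i
    rw [hf]
    dsimp only
    rw [one_div, Real.log_inv, hrw i, Real.log_mul (ne_of_gt (hx1 i)) (ne_of_gt (hx2i i))]
    ring
  have hsumlog : Summable fun i => Real.log (f i) :=
    (k1.1.add k2.1).congr fun i => (hlogf i).symm
  have hexp : Real.exp (∑' i, Real.log (f i)) = ∏' i, f i :=
    Real.rexp_tsum_eq_tprod hfpos hsumlog
  have hF : cubicGenFun x = ∏' i, f i := rfl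
  have hlogF : Real.log (cubicGenFun x) = ∑' i, Real.log (f i) := by
    rw [hF, ← hexp, Real.log_exp]
  rw [hlogF]
  have ht : ∑' i, Real.log (f i) = (∑' i : ℕ, -Real.log (1 - x ^ (i + 1))) +
      ∑' i : ℕ, -Real.log (1 - (x ^ 2) ^ (i + 1)) := by
    rw [← Summable.tsum_add k1.1 k2.1]
    exact tsum_congr hlogf
  rw [ht]
  have h1x : (0 : ℝ) < 1 - x := by linarith
  have h1x2 : (0 : ℝ) < 1 - x ^ 2 := by linarith
  have hA : (0 : ℝ) ≤ x / (1 - x) := div_nonneg h0.le h1x.le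
  have hB : x ^ 2 / (1 - x ^ 2) ≤ 1 / 2 * (x / (1 - x)) := by
    rw [div_mul_div_comm, one_mul, div_le_div_iff₀ h1x2 (by linarith)]
    nlinarith [mul_nonneg h0.le (sq_nonneg (1 - x))]
  have hpi : (0 : ℝ) ≤ π ^ 2 / 6 := by positivity
  calc (∑' i : ℕ, -Real.log (1 - x ^ (i + 1))) +
        ∑' i : ℕ, -Real.log (1 - (x ^ 2) ^ (i + 1))
      ≤ π ^ 2 / 6 * (x / (1 - x)) + π ^ 2 / 6 * (x ^ 2 / (1 - x ^ 2)) := add_le_add k1.2 k2.2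
    _ ≤ π ^ 2 / 4 * (x / (1 - x)) := by
        nlinarith [mul_le_mul_of_nonneg_left hB hpi]
end

section
/- For every positive integer n and every real number t > 0, log a(n) < π²/(4t) + n·t, where a is the cubic partition function. -/
open Finset Real


lemma multiset_sum_count (m : Multiset ℕ) (N : ℕ) (h : ∀ a ∈ m, a < N + 1) :
    m.sum = ∑ a ∈ Finset.range (N+1), m.count a * a := by
  induction m using Multiset.induction with
  | empty => simp
  | cons a m ih =>
      have ha : a ∈ Finset.range (N+1) := mem_range.2 (h a (Multiset.mem_cons_self a m))
      have ih' := ih (fun b hb => h b (Multiset.mem_cons_of_mem hb))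
      have key : ∑ x ∈ Finset.range (N+1), (Multiset.count x m + if x = a then 1 else 0) * x
          = (∑ x ∈ Finset.range (N+1), Multiset.count x m * x) + a := by
        have : ∀ x ∈ Finset.range (N+1), (Multiset.count x m + if x = a then 1 else 0) * x
            = Multiset.count x m * x + (if x = a then x else 0) := by
          intro x _; split <;> ring
        rw [Finset.sum_congr rfl this, Finset.sum_add_distrib,
          Finset.sum_ite_eq' (Finset.range (N+1)) a (fun x => x), if_pos ha]
      simp only [Multiset.sum_cons, Multiset.count_cons, ih', key]
      omega

lemma count_mul_le_sum (m : Multiset ℕ) (a : ℕ) : m.count a * a ≤ m.sum := by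
  have h : Multiset.replicate (m.count a) a ≤ m := Multiset.le_count_iff_replicate_le.1 le_rfl
  obtain ⟨u, hu⟩ := Multiset.le_iff_exists_add.1 h
  calc m.count a * a = (Multiset.replicate (m.count a) a).sum := by
        simp [Multiset.sum_replicate, smul_eq_mul]
    _ ≤ (Multiset.replicate (m.count a) a).sum + u.sum := Nat.le_add_right _ _
    _ = m.sum := by conv_rhs => rw [hu, Multiset.sum_add]

lemma partition_parts_lt {j N : ℕ} (hj : j ≤ N) (P : Nat.Partition j) :
    ∀ a ∈ P.parts, a < N + 1 := by
  intro a ha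
  have h1 : a ≤ P.parts.sum := Multiset.le_sum_of_mem ha
  rw [P.parts_sum] at h1; omega

lemma partition_sum_counts {j N : ℕ} (hj : j ≤ N) (P : Nat.Partition j) :
    ∑ k ∈ Finset.range N, P.parts.count (k+1) * (k+1) = j := by
  have h := multiset_sum_count P.parts N (partition_parts_lt hj P)
  rw [P.parts_sum] at h
  rw [Finset.sum_range_succ' (fun a => P.parts.count a * a) N] at h
  simpa using h.symm

lemma partition_count_le_s16 {j N : ℕ} (hj : j ≤ N) (P : Nat.Partition j) (k : ℕ) :
    P.parts.count (k+1) ≤ N := by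
  have h1 := count_mul_le_sum P.parts (k+1)
  rw [P.parts_sum] at h1
  nlinarith [Nat.le_mul_of_pos_right (P.parts.count (k+1)) (Nat.succ_pos k)]

lemma claimA (N : ℕ) {x : ℝ} (hx0 : 0 < x) (hx1 : x < 1) :
    ∑ j ∈ Finset.range (N+1), (Fintype.card (Nat.Partition j) : ℝ) * x^j
      ≤ ∏ k ∈ Finset.range N, (1 - x^(k+1))⁻¹ := by
  -- rewrite LHS as a sum over the sigma type
  have lhs_eq : ∑ j ∈ Finset.range (N+1), (Fintype.card (Nat.Partition j) : ℝ) * x^j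
      = ∑ a : (Σ j : Fin (N+1), Nat.Partition (j:ℕ)), x^((a.1 : ℕ)) := by
    calc ∑ j ∈ Finset.range (N+1), (Fintype.card (Nat.Partition j) : ℝ) * x^j
        = ∑ j : Fin (N+1), (Fintype.card (Nat.Partition (j:ℕ)) : ℝ) * x^(j:ℕ) :=
          (Fin.sum_univ_eq_sum_range (fun j => (Fintype.card (Nat.Partition j) : ℝ) * x^j) (N+1)).symm
      _ = ∑ j : Fin (N+1), ∑ _P : Nat.Partition (j:ℕ), x^((j:ℕ)) := by
          refine Finset.sum_congr rfl fun j _ => ?_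
          rw [Finset.sum_const, Finset.card_univ, nsmul_eq_mul]
      _ = ∑ a : (Σ j : Fin (N+1), Nat.Partition (j:ℕ)), x^((a.1 : ℕ)) := by
          rw [← Finset.univ_sigma_univ, Finset.sum_sigma]
  -- the injection into multiplicity functions
  let ψ : (Σ j : Fin (N+1), Nat.Partition (j:ℕ)) → (Fin N → Fin (N+1)) :=
    fun a k => ⟨a.2.parts.count ((k:ℕ)+1), Nat.lt_succ_of_le
      (partition_count_le_s16 (Nat.lt_succ_iff.1 a.1.isLt) a.2 k)⟩
  have hval : ∀ a, x^((a.1 : ℕ)) = ∏ k : Fin N, (x^((k:ℕ)+1))^((ψ a k : ℕ)) := by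
    intro ⟨j, P⟩
    have hj : (j:ℕ) ≤ N := Nat.lt_succ_iff.1 j.isLt
    have hsum := partition_sum_counts hj P
    have hj' : (j:ℕ) = ∑ k ∈ Finset.range N, (k+1) * P.parts.count (k+1) := by
      conv_lhs => rw [← hsum]
      exact Finset.sum_congr rfl fun k _ => Nat.mul_comm _ _
    calc x^((j:ℕ)) = x^(∑ k ∈ Finset.range N, ((k:ℕ)+1) * P.parts.count (k+1)) := by
          conv_lhs => rw [hj']
      _ = ∏ k ∈ Finset.range N, (x^(k+1))^(P.parts.count (k+1)) := by
          rw [← Finset.prod_pow_eq_pow_sum]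
          exact Finset.prod_congr rfl fun k _ => by rw [← pow_mul]
      _ = ∏ k : Fin N, (x^((k:ℕ)+1))^((ψ ⟨j, P⟩ k : ℕ)) := by
          rw [← Fin.prod_univ_eq_prod_range (fun k => (x^(k+1))^(P.parts.count (k+1))) N]
  have hinj : Function.Injective ψ := by
    intro a b hab
    obtain ⟨j₁, P₁⟩ := a
    obtain ⟨j₂, P₂⟩ := b
    have hcount : ∀ k : Fin N, P₁.parts.count ((k:ℕ)+1) = P₂.parts.count ((k:ℕ)+1) := by
      intro k
      have := congrFun hab k
      simpa [ψ, Fin.ext_iff] using this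
    have hj₁ : (j₁:ℕ) ≤ N := Nat.lt_succ_iff.1 j₁.isLt
    have hj₂ : (j₂:ℕ) ≤ N := Nat.lt_succ_iff.1 j₂.isLt
    have hjeq : (j₁:ℕ) = (j₂:ℕ) := by
      rw [← partition_sum_counts hj₁ P₁, ← partition_sum_counts hj₂ P₂]
      refine Finset.sum_congr rfl fun k hk => ?_
      rw [hcount ⟨k, Finset.mem_range.1 hk⟩]
    have hj' : j₁ = j₂ := Fin.ext hjeq
    subst hj'
    have hparts : P₁.parts = P₂.parts := by
      ext c
      rcases Nat.eq_zero_or_pos c with rfl | hc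
      · rw [Multiset.count_eq_zero_of_notMem, Multiset.count_eq_zero_of_notMem]
        · exact fun h => (P₂.parts_pos h).false
        · exact fun h => (P₁.parts_pos h).false
      · rcases Nat.lt_or_ge c (N+1) with hcN | hcN
        · have hck : c = (c - 1) + 1 := by omega
          rw [hck]
          exact hcount ⟨c - 1, by omega⟩
        · rw [Multiset.count_eq_zero_of_notMem, Multiset.count_eq_zero_of_notMem]
          · exact fun h => absurd (partition_parts_lt hj₁ P₂ c h) (by omega)
          · exact fun h => absurd (partition_parts_lt hj₁ P₁ c h) (by omega)
    exact congrArg _ (Nat.Partition.ext hparts)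
  -- compare with the full sum over functions
  have step : ∑ a : (Σ j : Fin (N+1), Nat.Partition (j:ℕ)), x^((a.1 : ℕ))
      ≤ ∑ f : Fin N → Fin (N+1), ∏ k : Fin N, (x^((k:ℕ)+1))^((f k : ℕ)) := by
    rw [Finset.sum_congr rfl (fun a _ => hval a)]
    have himg := Finset.sum_image (s := Finset.univ) (g := ψ)
      (f := fun f : Fin N → Fin (N+1) => ∏ k : Fin N, (x^((k:ℕ)+1))^((f k : ℕ)))
      (fun a _ b _ h => hinj h)
    refine le_trans (le_of_eq himg.symm) ?_
    refine Finset.sum_le_sum_of_subset_of_nonneg (Finset.subset_univ _) fun f _ _ => ?_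
    exact Finset.prod_nonneg fun k _ => pow_nonneg (pow_nonneg hx0.le _) _
  -- product of geometric sums
  have swap : ∑ f : Fin N → Fin (N+1), ∏ k : Fin N, (x^((k:ℕ)+1))^((f k : ℕ))
      = ∏ k : Fin N, ∑ m : Fin (N+1), (x^((k:ℕ)+1))^((m : ℕ)) := by
    rw [Finset.prod_univ_sum]
    rw [Fintype.piFinset_univ]
  have geom : ∀ k : Fin N, ∑ m : Fin (N+1), (x^((k:ℕ)+1))^((m : ℕ)) ≤ (1 - x^((k:ℕ)+1))⁻¹ := by
    intro k
    set y := x^((k:ℕ)+1) with hy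
    have hy0 : 0 < y := pow_pos hx0 _
    have hy1 : y < 1 := pow_lt_one₀ hx0.le hx1 (Nat.succ_ne_zero _)
    rw [Fin.sum_univ_eq_sum_range (fun m => y^m) (N+1)]
    have h1y : (0:ℝ) < 1 - y := by linarith
    rw [inv_eq_one_div, le_div_iff₀ h1y]
    nlinarith [geom_sum_mul y (N+1), pow_pos hy0 (N+1)]
  calc ∑ j ∈ Finset.range (N+1), (Fintype.card (Nat.Partition j) : ℝ) * x^j
      = ∑ a : (Σ j : Fin (N+1), Nat.Partition (j:ℕ)), x^((a.1 : ℕ)) := lhs_eq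
    _ ≤ ∑ f : Fin N → Fin (N+1), ∏ k : Fin N, (x^((k:ℕ)+1))^((f k : ℕ)) := step
    _ = ∏ k : Fin N, ∑ m : Fin (N+1), (x^((k:ℕ)+1))^((m : ℕ)) := swap
    _ ≤ ∏ k : Fin N, (1 - x^((k:ℕ)+1))⁻¹ := by
        refine Finset.prod_le_prod (fun k _ => ?_) (fun k _ => geom k)
        exact Finset.sum_nonneg fun m _ => pow_nonneg (pow_nonneg hx0.le _) _
    _ = ∏ k ∈ Finset.range N, (1 - x^(k+1))⁻¹ :=
        Fin.prod_univ_eq_prod_range (fun k => (1 - x^(k+1))⁻¹) N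


lemma claimB (n : ℕ) {s : ℝ} (hs : 0 < s) :
    ∑ k ∈ Finset.range n, -Real.log (1 - Real.exp (-(((k:ℝ)+1) * s)))
      ≤ π^2/6 / s := by
  set f : ℕ → ℕ → ℝ := fun k m => (Real.exp (-(((k:ℝ)+1) * s)))^(m+1) / (m+1) with hf
  have hx : ∀ k : ℕ, |Real.exp (-(((k:ℝ)+1) * s))| < 1 := by
    intro k
    rw [abs_of_pos (Real.exp_pos _)]
    rw [Real.exp_lt_one_iff]
    have : (0:ℝ) < ((k:ℝ)+1) * s := by positivity
    linarith
  have hhs : ∀ k : ℕ, HasSum (f k) (-Real.log (1 - Real.exp (-(((k:ℝ)+1) * s)))) :=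
    fun k => hasSum_pow_div_log_of_abs_lt_one (hx k)
  have hswap : ∑ k ∈ Finset.range n, -Real.log (1 - Real.exp (-(((k:ℝ)+1) * s)))
      = ∑' m : ℕ, ∑ k ∈ Finset.range n, f k m := by
    rw [Summable.tsum_finsetSum (fun k _ => (hhs k).summable)]
    exact Finset.sum_congr rfl fun k _ => ((hhs k).tsum_eq).symm
  -- termwise bound
  have hbound : ∀ m : ℕ, ∑ k ∈ Finset.range n, f k m ≤ (1/((m:ℝ)+1)^2) / s := by
    intro m
    set r : ℝ := Real.exp (-(((m:ℝ)+1) * s)) with hr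
    have hr0 : 0 < r := Real.exp_pos _
    have hu : (0:ℝ) < ((m:ℝ)+1) * s := by positivity
    have hr1 : r < 1 := Real.exp_lt_one_iff.mpr (by linarith)
    have hterm : ∀ k : ℕ, f k m = r^(k+1) / ((m:ℝ)+1) := by
      intro k
      simp only [hf, hr]
      rw [← Real.exp_nat_mul, ← Real.exp_nat_mul]
      push_cast
      ring_nf
    have hgeom : ∑ k ∈ Finset.range n, r^(k+1) ≤ 1 / (((m:ℝ)+1) * s) := by
      have h1r : (0:ℝ) < 1 - r := by linarith
      have hsum : ∑ k ∈ Finset.range n, r^(k+1) = r * ∑ k ∈ Finset.range n, r^k := by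
        rw [Finset.mul_sum]; exact Finset.sum_congr rfl fun k _ => by ring
      rw [hsum, le_div_iff₀ hu]
      -- r * (geom sum) * ((m+1)s) ≤ 1 ; use (m+1)s ≤ e^{(m+1)s} - 1 = (1-r)/r
      have hgs : (∑ k ∈ Finset.range n, r^k) * (1 - r) ≤ 1 := by
        nlinarith [geom_sum_mul r n, pow_pos hr0 n]
      have hexp : ((m:ℝ)+1) * s * r ≤ 1 - r := by
        have h := Real.add_one_le_exp (((m:ℝ)+1) * s)
        have hrr : r * Real.exp (((m:ℝ)+1) * s) = 1 := by
          rw [hr, ← Real.exp_add]; simp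
        nlinarith [hr0]
      have hg0 : 0 ≤ ∑ k ∈ Finset.range n, r^k :=
        Finset.sum_nonneg fun k _ => pow_nonneg hr0.le k
      nlinarith [hg0, hgs, hexp, hr0]
    calc ∑ k ∈ Finset.range n, f k m
        = (∑ k ∈ Finset.range n, r^(k+1)) / ((m:ℝ)+1) := by
          rw [Finset.sum_div]; exact Finset.sum_congr rfl fun k _ => hterm k
      _ ≤ (1 / (((m:ℝ)+1) * s)) / ((m:ℝ)+1) := by
          apply div_le_div_of_nonneg_right hgeom (by positivity) |>.trans le_rfl
      _ = (1/((m:ℝ)+1)^2) / s := by field_simp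
  -- Basel
  have hz : HasSum (fun m : ℕ => (1:ℝ)/((m:ℝ)+1)^2) (π^2/6) := by
    have h := (hasSum_nat_add_iff' (f := fun n : ℕ => (1:ℝ)/(n:ℝ)^2) 1).mpr hasSum_zeta_two
    simpa using h
  have hzs : HasSum (fun m : ℕ => (1/((m:ℝ)+1)^2) / s) (π^2/6 / s) := hz.div_const s
  rw [hswap]
  calc ∑' m : ℕ, ∑ k ∈ Finset.range n, f k m
      ≤ ∑' m : ℕ, (1/((m:ℝ)+1)^2) / s := by
        apply Summable.tsum_le_tsum hbound
        · exact summable_sum fun k _ => (hhs k).summable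
        · exact hzs.summable
    _ = π^2/6 / s := hzs.tsum_eq

lemma cubicPartition_pos (n : ℕ) : 0 < cubicPartition n := by
  unfold cubicPartition
  apply Finset.sum_pos
  · intro j _
    have h1 : 0 < Fintype.card (Nat.Partition j) := Fintype.card_pos
    have h2 : 0 < Fintype.card (Nat.Partition (n - 2*j)) := Fintype.card_pos
    positivity
  · exact ⟨0, Finset.mem_range.2 (Nat.succ_pos _)⟩

open Real in
theorem log_cubicPartition_lt (n : ℕ) (hn : 0 < n) (t : ℝ) (ht : 0 < t) :
    Real.log (cubicPartition n) < π ^ 2 / (4 * t) + n * t := by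
  set q : ℝ := Real.exp (-t) with hqdef
  have hq0 : 0 < q := Real.exp_pos _
  have hq1 : q < 1 := Real.exp_lt_one_iff.mpr (by linarith)
  have hq20 : 0 < q^2 := by positivity
  have hq21 : q^2 < 1 := by nlinarith
  set g : ℕ × ℕ → ℝ := fun p =>
    ((Fintype.card (Nat.Partition p.1) : ℝ) * (q^2)^p.1) *
    ((Fintype.card (Nat.Partition p.2) : ℝ) * q^p.2) with hg
  have hgnonneg : ∀ p : ℕ × ℕ, 0 ≤ g p := by
    intro p; apply mul_nonneg <;> positivity
  set S1 : ℝ := ∑ j ∈ Finset.range (n+1), (Fintype.card (Nat.Partition j) : ℝ) * q^j with hS1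
  set S2 : ℝ := ∑ j ∈ Finset.range (n+1), (Fintype.card (Nat.Partition j) : ℝ) * (q^2)^j with hS2
  -- Step 1 : diagonal sum
  have hdiag : (cubicPartition n : ℝ) * q^n
      = ∑ j ∈ Finset.range (n/2+1), g (j, n - 2*j) := by
    unfold cubicPartition
    push_cast
    rw [Finset.sum_mul]
    refine Finset.sum_congr rfl fun j hj => ?_
    have h2j : 2*j ≤ n := by
      have := Nat.lt_succ_iff.1 (Finset.mem_range.1 hj)
      calc 2*j ≤ 2*(n/2) := by omega
        _ ≤ n := by omega
    have hqn : q^n = (q^2)^j * q^(n - 2*j) := by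
      rw [← pow_mul, ← pow_add]
      congr 1
      omega
    rw [hqn, hg]
    ring
  have hprod : S2 * S1 = ∑ p ∈ (Finset.range (n+1)) ×ˢ (Finset.range (n+1)), g p := by
    rw [hS1, hS2, Finset.sum_mul_sum]
    rw [Finset.sum_product]
  set D : Finset (ℕ × ℕ) := (Finset.range (n/2+1)).image (fun j => (j, n - 2*j)) with hD
  have hDsum : ∑ p ∈ D, g p = ∑ j ∈ Finset.range (n/2+1), g (j, n - 2*j) := by
    apply Finset.sum_image
    intro a _ b _ h
    exact congrArg Prod.fst h
  have h00 : (0,0) ∉ D := by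
    rw [hD]
    simp only [Finset.mem_image, Finset.mem_range, not_exists]
    rintro j ⟨hj, hje⟩
    have h1 : j = 0 := congrArg Prod.fst hje
    have h2 : n - 2*j = 0 := congrArg Prod.snd hje
    omega
  have hsub : insert (0,0) D ⊆ (Finset.range (n+1)) ×ˢ (Finset.range (n+1)) := by
    intro p hp
    rcases Finset.mem_insert.1 hp with rfl | hp
    · exact Finset.mem_product.2 ⟨Finset.mem_range.2 (by omega), Finset.mem_range.2 (by omega)⟩
    · rw [hD] at hp
      obtain ⟨j, hj, rfl⟩ := Finset.mem_image.1 hp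
      have := Finset.mem_range.1 hj
      exact Finset.mem_product.2 ⟨Finset.mem_range.2 (by omega), Finset.mem_range.2 (by omega)⟩
  have hg00 : g (0,0) = 1 := by
    rw [hg]
    simp [Fintype.card_unique]
  have hstep1 : (cubicPartition n : ℝ) * q^n + 1 ≤ S2 * S1 := by
    rw [hdiag, hprod, ← hDsum, ← hg00]
    rw [add_comm, ← Finset.sum_insert h00]
    exact Finset.sum_le_sum_of_subset_of_nonneg hsub fun p _ _ => hgnonneg p
  -- Step 2 : product bounds
  set P1 : ℝ := ∏ k ∈ Finset.range n, (1 - q^(k+1))⁻¹ with hP1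
  set P2 : ℝ := ∏ k ∈ Finset.range n, (1 - (q^2)^(k+1))⁻¹ with hP2
  have hS1P : S1 ≤ P1 := claimA n hq0 hq1
  have hS2P : S2 ≤ P2 := claimA n hq20 hq21
  have hS1nn : 0 ≤ S1 := Finset.sum_nonneg fun j _ => by positivity
  have hP2pos : 0 < P2 := Finset.prod_pos fun k _ => by
    have : (q^2)^(k+1) < 1 := pow_lt_one₀ hq20.le hq21 (Nat.succ_ne_zero _)
    have h' : 0 < 1 - (q^2)^(k+1) := by linarith
    positivity
  have hP1pos : 0 < P1 := Finset.prod_pos fun k _ => by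
    have : q^(k+1) < 1 := pow_lt_one₀ hq0.le hq1 (Nat.succ_ne_zero _)
    have h' : 0 < 1 - q^(k+1) := by linarith
    positivity
  have hstep2 : (cubicPartition n : ℝ) * q^n < P2 * P1 := by
    have h := mul_le_mul hS2P hS1P hS1nn hP2pos.le
    linarith
  -- Step 3 : take logs
  have hApos : (0:ℝ) < (cubicPartition n : ℝ) := by
    exact_mod_cast cubicPartition_pos n
  have hAq : 0 < (cubicPartition n : ℝ) * q^n := by positivity
  have hlog1 : Real.log ((cubicPartition n : ℝ) * q^n)
      = Real.log (cubicPartition n) - n * t := by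
    rw [Real.log_mul hApos.ne' (by positivity), Real.log_pow, hqdef, Real.log_exp]
    ring
  have hlogP1 : Real.log P1 ≤ π^2/6 / t := by
    rw [hP1, Real.log_prod (fun k _ => by
      have : q^(k+1) < 1 := pow_lt_one₀ hq0.le hq1 (Nat.succ_ne_zero _)
      have h' : 0 < 1 - q^(k+1) := by linarith
      positivity)]
    have heq : ∀ k ∈ Finset.range n, Real.log ((1 - q^(k+1))⁻¹)
        = -Real.log (1 - Real.exp (-(((k:ℝ)+1) * t))) := by
      intro k _
      rw [Real.log_inv]
      congr 2
      rw [hqdef, ← Real.exp_nat_mul]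
      congr 1
      push_cast
      ring
    rw [Finset.sum_congr rfl heq]
    exact claimB n ht
  have hlogP2 : Real.log P2 ≤ π^2/6 / (2*t) := by
    rw [hP2, Real.log_prod (fun k _ => by
      have : (q^2)^(k+1) < 1 := pow_lt_one₀ hq20.le hq21 (Nat.succ_ne_zero _)
      have h' : 0 < 1 - (q^2)^(k+1) := by linarith
      positivity)]
    have heq : ∀ k ∈ Finset.range n, Real.log ((1 - (q^2)^(k+1))⁻¹)
        = -Real.log (1 - Real.exp (-(((k:ℝ)+1) * (2*t)))) := by
      intro k _
      rw [Real.log_inv]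
      congr 2
      rw [hqdef, ← Real.exp_nat_mul, ← Real.exp_nat_mul]
      congr 1
      push_cast
      ring
    rw [Finset.sum_congr rfl heq]
    exact claimB n (by linarith)
  have hloglt : Real.log ((cubicPartition n : ℝ) * q^n) < Real.log (P2 * P1) :=
    Real.log_lt_log hAq hstep2
  rw [hlog1, Real.log_mul hP2pos.ne' hP1pos.ne'] at hloglt
  have hfinal : π^2/6/(2*t) + π^2/6/t = π^2/(4*t) := by
    field_simp
    ring
  nlinarith [hloglt, hlogP1, hlogP2, hfinal]
end
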